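/- For every natural number n ≥ 1, ∑_{k=1}^{n-1} (-1)^{k+1} (1/k) · C(n, k+1) = ∑_{k=1}^{n-1} (n/k - 1), as rational numbers. -/

import Mathlib

open Finset

lemma alt_choose (m : ℕ) (hm : 1 ≤ m) :
    ∑ i ∈ range (m + 1), (-1 : ℚ) ^ i * (m.choose i) = 0 := by
  have h := Int.alternating_sum_range_choose (n := m)
  rw [if_neg (by omega)] at h
  have h2 := congrArg (fun z : ℤ => (z : ℚ)) h
  push_cast at h2
  simpa using h2

lemma alt_choose_shift (m : ℕ) :
    ∑ j ∈ range (m + 1), (-1 : ℚ) ^ j * ((m + 1).choose (j + 1)) = 1 := by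
  have h := alt_choose (m + 1) (by omega)
  rw [Finset.sum_range_succ'] at h
  simp only [Nat.choose_zero_right, pow_zero] at h
  norm_num at h
  have : ∑ j ∈ range (m + 1), (-1 : ℚ) ^ (j + 1) * ((m + 1).choose (j + 1)) = -1 := by
    linarith
  calc ∑ j ∈ range (m + 1), (-1 : ℚ) ^ j * ((m + 1).choose (j + 1))
      = -∑ j ∈ range (m + 1), (-1 : ℚ) ^ (j + 1) * ((m + 1).choose (j + 1)) := by
        rw [← Finset.sum_neg_distrib]
        exact Finset.sum_congr rfl fun j _ => by ring
    _ = 1 := by rw [this]; ring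

lemma harm' (n : ℕ) :
    ∑ j ∈ range n, (-1 : ℚ) ^ j * (n.choose (j + 1)) / (j + 1) =
      ∑ j ∈ range n, (1 : ℚ) / (j + 1) := by
  induction n with
  | zero => simp
  | succ n ih =>
    have split : ∑ j ∈ range (n + 1), (-1 : ℚ) ^ j * ((n + 1).choose (j + 1)) / (j + 1) =
        (∑ j ∈ range (n + 1), (-1 : ℚ) ^ j * (n.choose (j + 1)) / (j + 1)) +
        ∑ j ∈ range (n + 1), (-1 : ℚ) ^ j * (n.choose j) / (j + 1) := by
      rw [← Finset.sum_add_distrib]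
      refine Finset.sum_congr rfl fun j _ => ?_
      rw [Nat.choose_succ_succ]
      push_cast
      ring
    have first : ∑ j ∈ range (n + 1), (-1 : ℚ) ^ j * (n.choose (j + 1)) / (j + 1) =
        ∑ j ∈ range n, (1 : ℚ) / (j + 1) := by
      rw [Finset.sum_range_succ, Nat.choose_succ_self, ih]
      simp
    have key : ∀ j : ℕ, ((n.choose j : ℚ)) / (j + 1) = ((n + 1).choose (j + 1) : ℚ) / (n + 1) := by
      intro j
      have h := Nat.add_one_mul_choose_eq n j
      have h' : ((n + 1 : ℕ) : ℚ) * (n.choose j) = ((n + 1).choose (j + 1)) * ((j + 1 : ℕ) : ℚ) := by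
        exact_mod_cast congrArg (fun x : ℕ => (x : ℚ)) h
      push_cast at h'
      field_simp
      linarith [h']
    have second : ∑ j ∈ range (n + 1), (-1 : ℚ) ^ j * (n.choose j) / (j + 1) =
        1 / (n + 1) := by
      have : ∀ j ∈ range (n + 1), (-1 : ℚ) ^ j * (n.choose j) / (j + 1) =
          ((-1 : ℚ) ^ j * ((n + 1).choose (j + 1))) * (1 / (n + 1)) := by
        intro j _
        rw [mul_div_assoc, key j]
        ring
      rw [Finset.sum_congr rfl this, ← Finset.sum_mul, alt_choose_shift]
      ring
    rw [split, first, second, Finset.sum_range_succ]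

lemma main' (m : ℕ) :
    ∑ j ∈ range m, (-1 : ℚ) ^ j * (1 / (j + 1)) * ((m + 1).choose (j + 2)) =
      ∑ j ∈ range m, (((m : ℚ) + 1) / (j + 1) - 1) := by
  induction m with
  | zero => simp
  | succ m ih =>
    have split : ∑ j ∈ range (m + 1), (-1 : ℚ) ^ j * (1 / (j + 1)) * ((m + 2).choose (j + 2)) =
        (∑ j ∈ range (m + 1), (-1 : ℚ) ^ j * (1 / (j + 1)) * ((m + 1).choose (j + 2))) +
        ∑ j ∈ range (m + 1), (-1 : ℚ) ^ j * ((m + 1).choose (j + 1)) / (j + 1) := by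
      rw [← Finset.sum_add_distrib]
      refine Finset.sum_congr rfl fun j _ => ?_
      have : (m + 2).choose (j + 2) = (m + 1).choose (j + 1) + (m + 1).choose (j + 2) :=
        Nat.choose_succ_succ (m + 1) (j + 1)
      rw [this]
      push_cast
      ring
    have first : ∑ j ∈ range (m + 1), (-1 : ℚ) ^ j * (1 / (j + 1)) * ((m + 1).choose (j + 2)) =
        ∑ j ∈ range m, (((m : ℚ) + 1) / (j + 1) - 1) := by
      rw [Finset.sum_range_succ]
      have : (m + 1).choose (m + 2) = 0 := Nat.choose_eq_zero_of_lt (by omega)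
      rw [this, ih]
      simp
    rw [split, first, harm' (m + 1)]
    push_cast
    rw [Finset.sum_range_succ, Finset.sum_range_succ]
    have hsum : (∑ j ∈ range m, (((m : ℚ) + 1) / (j + 1) - 1)) +
        ∑ j ∈ range m, (1 : ℚ) / (j + 1) =
        ∑ j ∈ range m, (((m : ℚ) + 1 + 1) / (j + 1) - 1) := by
      rw [← Finset.sum_add_distrib]
      refine Finset.sum_congr rfl fun j _ => ?_
      have hj : ((j : ℚ) + 1) ≠ 0 := by positivity
      field_simp
      ring
    have hm1 : ((m : ℚ) + 1) ≠ 0 := by positivity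
    have hsc : (1 : ℚ) / (m + 1) = ((m : ℚ) + 1 + 1) / (m + 1) - 1 := by
      field_simp
      ring
    linarith [hsum]

theorem euler_case2 (n : ℕ) (hn : 1 ≤ n) :
    ∑ k ∈ Finset.Icc 1 (n - 1), (-1 : ℚ) ^ (k + 1) * (1 / k) * (n.choose (k + 1)) =
      ∑ k ∈ Finset.Icc 1 (n - 1), ((n : ℚ) / k - 1) := by
  obtain ⟨m, rfl⟩ : ∃ m, n = m + 1 := ⟨n - 1, by omega⟩
  simp only [Nat.add_sub_cancel]
  rw [← Finset.Ico_add_one_right_eq_Icc, Finset.sum_Ico_eq_sum_range, Finset.sum_Ico_eq_sum_range]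
  simp only [Nat.succ_sub_one, Nat.add_sub_cancel]
  have h := main' m
  calc ∑ j ∈ range m, (-1 : ℚ) ^ (1 + j + 1) * (1 / (1 + j : ℕ)) * ((m + 1).choose (1 + j + 1))
      = ∑ j ∈ range m, (-1 : ℚ) ^ j * (1 / (j + 1)) * ((m + 1).choose (j + 2)) := by
        refine Finset.sum_congr rfl fun j _ => ?_
        have e1 : 1 + j + 1 = j + 2 := by omega
        rw [e1]
        push_cast
        ring_nf
    _ = ∑ j ∈ range m, (((m : ℚ) + 1) / (j + 1) - 1) := h
    _ = ∑ j ∈ range m, (((m + 1 : ℕ) : ℚ) / ((1 + j : ℕ)) - 1) := by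
        refine Finset.sum_congr rfl fun j _ => ?_
        push_cast
        ring_nf
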